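/- For every ε > 0 there exist δ > 0 and P such that the following holds: for every prime p ≥ P, every subset D ⊆ ℤ/pℤ with p − |D| ≤ δ·p, and every b ∈ ℤ/pℤ, the number N(b,D) of subsets S ⊆ D whose elements sum to b satisfies |p · N(b,D) / 2^{|D|} − 1| ≤ ε. In other words, if n = |D| = p − o(p), then N(b,D) = (2^n / p)(1 + o(1)). -/

import Mathlib

open Finset Complex Polynomial

noncomputable def zz (p : ℕ) : ℂ := Complex.exp (2 * Real.pi * Complex.I / p)

lemma zz_prim (p : ℕ) (hp : p ≠ 0) : IsPrimitiveRoot (zz p) p :=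
  Complex.isPrimitiveRoot_exp p hp

noncomputable def ee (p : ℕ) [NeZero p] : AddChar (ZMod p) ℂ :=
  AddChar.zmodChar p ((zz_prim p (NeZero.ne p)).pow_eq_one)

lemma ee_apply (p : ℕ) [NeZero p] (a : ZMod p) : ee p a = zz p ^ a.val :=
  AddChar.zmodChar_apply ..

noncomputable def dd {p : ℕ} [NeZero p] (x : ZMod p) : ℕ := ((p : ℤ) - 2 * x.val).natAbs

lemma ee_eq_exp (p : ℕ) [NeZero p] (a : ZMod p) :
    ee p a = Complex.exp ((2 * Real.pi * a.val / p : ℝ) * Complex.I) := by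
  rw [ee_apply, zz, ← Complex.exp_nat_mul]
  congr 1
  have h0 : (p : ℂ) ≠ 0 := Nat.cast_ne_zero.mpr (NeZero.ne p)
  push_cast
  field_simp

lemma norm_ee (p : ℕ) [NeZero p] (a : ZMod p) : ‖ee p a‖ = 1 := by
  rw [ee_eq_exp, Complex.norm_exp_ofReal_mul_I]

lemma norm_one_add_ee (p : ℕ) [NeZero p] (a : ZMod p) :
    ‖1 + ee p a‖ = 2 * |Real.cos (Real.pi * a.val / p)| := by
  set θ : ℝ := Real.pi * a.val / p with hθ
  have key : (1 : ℂ) + ee p a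
      = Complex.exp ((θ : ℂ) * Complex.I) * (2 * Complex.cos (θ : ℂ)) := by
    rw [Complex.two_cos, mul_add, ← Complex.exp_add, ← Complex.exp_add, ee_eq_exp]
    have h1 : (θ:ℂ) * Complex.I + -(θ:ℂ) * Complex.I = 0 := by ring
    have h2 : (θ:ℂ) * Complex.I + (θ:ℂ) * Complex.I = ((2 * Real.pi * a.val / p : ℝ) : ℂ) * Complex.I := by
      push_cast [hθ]
      have h0 : (p : ℂ) ≠ 0 := Nat.cast_ne_zero.mpr (NeZero.ne p)
      field_simp
      ring
    rw [h1, h2, Complex.exp_zero]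
    ring
  rw [key, norm_mul, Complex.norm_exp_ofReal_mul_I, one_mul,
    norm_mul, ← Complex.ofReal_cos]
  simp only [Complex.norm_two, ← Complex.ofReal_cos,
    Complex.norm_real, Real.norm_eq_abs]

lemma two_dd_le (p : ℕ) [NeZero p] (a : ZMod p) :
    2 * (dd a : ℝ) / p ≤ ‖1 + ee p a‖ := by
  have hppos : 0 < p := Nat.pos_of_ne_zero (NeZero.ne p)
  have hp0 : 0 < (p : ℝ) := Nat.cast_pos.mpr hppos
  have hπ := Real.pi_pos
  have hvlt : a.val < p := ZMod.val_lt a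
  have hdp : dd a ≤ p := by simp only [dd]; omega
  rw [norm_one_add_ee]
  have habs : |Real.cos (Real.pi * a.val / p)| = Real.sin (Real.pi * dd a / (2 * p)) := by
    rcases le_or_gt (2 * a.val) p with h | h
    · have hdd : dd a = p - 2 * a.val := by simp only [dd]; omega
      have hddR : (dd a : ℝ) = p - 2 * a.val := by rw [hdd]; push_cast [h]; ring
      have hang : Real.pi * dd a / (2 * p) = Real.pi / 2 - Real.pi * a.val / p := by
        rw [hddR]; field_simp
      rw [hang, Real.sin_pi_div_two_sub]
      apply _root_.abs_of_nonneg
      apply Real.cos_nonneg_of_mem_Icc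
      constructor
      · have h0 : (0:ℝ) ≤ Real.pi * a.val / p := by positivity
        have := Real.pi_pos
        linarith
      · rw [div_le_iff₀ hp0] at *
        have h2 : (2 : ℝ) * a.val ≤ p := by exact_mod_cast h
        nlinarith
    · have hdd : dd a = 2 * a.val - p := by simp only [dd]; omega
      have hddR : (dd a : ℝ) = 2 * a.val - p := by rw [hdd]; push_cast [le_of_lt h]; ring
      have hang : Real.pi * dd a / (2 * p) = Real.pi * a.val / p - Real.pi / 2 := by
        rw [hddR]; field_simp
      rw [hang, Real.sin_sub_pi_div_two]
      have hcle : Real.cos (Real.pi * a.val / p) ≤ 0 := by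
        apply Real.cos_nonpos_of_pi_div_two_le_of_le
        · rw [le_div_iff₀ hp0]
          have h2 : (p : ℝ) ≤ 2 * a.val := by exact_mod_cast le_of_lt h
          nlinarith
        · rw [div_le_iff₀ hp0]
          have h2 : (a.val : ℝ) ≤ p := by exact_mod_cast le_of_lt hvlt
          nlinarith
      rw [abs_of_nonpos hcle]
  rw [habs]
  have harg1 : 0 ≤ Real.pi * dd a / (2 * p) := by positivity
  have harg2 : Real.pi * dd a / (2 * p) ≤ Real.pi / 2 := by
    rw [div_le_div_iff₀ (by positivity) two_pos]
    have : (dd a : ℝ) ≤ p := by exact_mod_cast hdp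
    nlinarith
  have hsin := Real.mul_le_sin harg1 harg2
  have heq : 2 / Real.pi * (Real.pi * dd a / (2 * p)) = dd a / p := by
    field_simp
  rw [heq] at hsin
  calc 2 * (dd a : ℝ) / p = 2 * (dd a / p) := by ring
    _ ≤ 2 * Real.sin (Real.pi * dd a / (2 * p)) := by linarith

lemma prod_one_add_ee (p : ℕ) [NeZero p] (hp1 : 1 < p) (hodd : p % 2 = 1) :
    ∏ x : ZMod p, (1 + ee p x) = 2 := by
  have h0 : p ≠ 0 := NeZero.ne p
  have hpos : 0 < p := Nat.pos_of_ne_zero h0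
  have hprim := zz_prim p h0
  -- transfer to nthRootsFinset
  have htrans : ∏ x : ZMod p, (1 + ee p x) = ∏ μ ∈ nthRootsFinset p (1 : ℂ), (1 + μ) := by
    apply Finset.prod_bij (fun (x : ZMod p) _ => ee p x)
    · intro x _
      rw [Polynomial.mem_nthRootsFinset hpos (1 : ℂ), ee_apply, ← pow_mul, mul_comm, pow_mul,
        hprim.pow_eq_one, one_pow]
    · intro x _ y _ hxy
      rw [ee_apply, ee_apply] at hxy
      exact ZMod.val_injective p (hprim.pow_inj (ZMod.val_lt x) (ZMod.val_lt y) hxy)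
    · intro μ hμ
      rw [Polynomial.mem_nthRootsFinset hpos (1 : ℂ)] at hμ
      obtain ⟨i, hi, rfl⟩ := hprim.eq_pow_of_pow_eq_one hμ
      exact ⟨(i : ZMod p), Finset.mem_univ _, by rw [ee_apply, ZMod.val_natCast_of_lt hi]⟩
    · intros; rfl
  -- evaluate X^p - 1 at -1
  have hpoly := Polynomial.X_pow_sub_one_eq_prod (R := ℂ) hpos hprim
  have heval := congrArg (Polynomial.eval (-1 : ℂ)) hpoly
  rw [Polynomial.eval_sub, Polynomial.eval_pow, Polynomial.eval_X, Polynomial.eval_one,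
    Polynomial.eval_prod] at heval
  simp only [Polynomial.eval_sub, Polynomial.eval_X, Polynomial.eval_C] at heval
  have hodd' : Odd p := Nat.odd_iff.mpr hodd
  rw [hodd'.neg_one_pow] at heval
  -- heval : -1 - 1 = ∏ μ, (-1 - μ)
  have hneg : ∏ μ ∈ nthRootsFinset p (1 : ℂ), (1 + μ)
      = (-1 : ℂ) ^ (nthRootsFinset p (1 : ℂ)).card * ∏ μ ∈ nthRootsFinset p (1 : ℂ), (-1 - μ) := by
    rw [← Finset.prod_const, ← Finset.prod_mul_distrib]
    apply Finset.prod_congr rfl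
    intros; ring
  rw [htrans, hneg, hprim.card_nthRootsFinset, hodd'.neg_one_pow, ← heval]
  ring

lemma count_dd {p : ℕ} [NeZero p] (v : ℕ) :
    (univ.filter fun x : ZMod p => dd x ≤ v).card ≤ v + 1 := by
  rcases le_or_gt p v with h | h
  · calc (univ.filter fun x : ZMod p => dd x ≤ v).card ≤ (univ : Finset (ZMod p)).card :=
          card_le_card (filter_subset _ _)
      _ = p := by simp [ZMod.card]
      _ ≤ v + 1 := by omega
  · have key : (univ.filter fun x : ZMod p => dd x ≤ v).card
        ≤ (Finset.Icc ((p-v+1)/2) ((p+v)/2)).card := by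
      apply Finset.card_le_card_of_injOn (fun x => x.val)
      · intro x hx
        simp only [Finset.mem_coe, mem_filter, mem_univ, true_and, dd] at hx
        have hlt : x.val < p := ZMod.val_lt x
        have hx' : ((p : ℤ) - 2 * x.val).natAbs ≤ v := by simpa using hx
        simp only [Finset.mem_coe, Finset.mem_Icc]
        omega
      · intro a _ b _ hab
        exact ZMod.val_injective p hab
    rw [Nat.card_Icc] at key
    omega

lemma dd_pos {p : ℕ} [NeZero p] (hodd : p % 2 = 1) (x : ZMod p) : 1 ≤ dd x := by
  have hlt : x.val < p := ZMod.val_lt x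
  simp only [dd]
  omega

lemma prod_dd {p : ℕ} [NeZero p] (hodd : p % 2 = 1) (T : Finset (ZMod p)) :
    Nat.factorial T.card ≤ 2 ^ T.card * ∏ x ∈ T, dd x := by
  induction T using Finset.strongInduction with
  | _ T ih =>
    rcases T.eq_empty_or_nonempty with rfl | hne
    · simp
    · obtain ⟨x₀, hx₀T, hmax⟩ := Finset.exists_max_image T dd hne
      set v := dd x₀ with hv
      have hv1 : 1 ≤ v := dd_pos hodd x₀
      have hcard : T.card ≤ v + 1 := by
        calc T.card ≤ (univ.filter fun x : ZMod p => dd x ≤ v).card := by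
              apply card_le_card
              intro x hx
              simp only [mem_filter, mem_univ, true_and]
              exact hmax x hx
          _ ≤ v + 1 := count_dd v
      have hT' := ih (T.erase x₀) (Finset.erase_ssubset hx₀T)
      have hce : (T.erase x₀).card = T.card - 1 := Finset.card_erase_of_mem hx₀T
      have hprod : ∏ x ∈ T, dd x = v * ∏ x ∈ T.erase x₀, dd x :=
        (Finset.mul_prod_erase T dd hx₀T).symm
      have hcpos : 1 ≤ T.card := Finset.card_pos.mpr hne
      calc Nat.factorial T.card = T.card * Nat.factorial (T.card - 1) := by
            rw [← Nat.succ_pred_eq_of_pos hcpos, Nat.factorial_succ]; simp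
        _ ≤ (2 * v) * (2 ^ (T.card - 1) * ∏ x ∈ T.erase x₀, dd x) := by
            apply Nat.mul_le_mul (by omega)
            rw [← hce]; exact hT'
        _ = 2 ^ T.card * ∏ x ∈ T, dd x := by
            rw [hprod, ← Nat.succ_pred_eq_of_pos hcpos, pow_succ, Nat.succ_sub_one]
            ring

lemma sum_ee_mul (p : ℕ) [NeZero p] (c : ZMod p) :
    ∑ t : ZMod p, ee p (t * c) = if c = 0 then (p : ℂ) else 0 := by
  split_ifs with hc
  · subst hc
    simp [ZMod.card]
  · have hprim := zz_prim p (NeZero.ne p)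
    have hprimchar : (ee p).IsPrimitive :=
      AddChar.zmodChar_primitive_of_primitive_root p hprim
    have hne : AddChar.mulShift (ee p) c ≠ 0 := hprimchar hc
    have := (AddChar.sum_eq_zero_iff_ne_zero (ψ := AddChar.mulShift (ee p) c)).mpr hne
    rw [← this]
    apply Fintype.sum_congr
    intro t
    rw [AddChar.mulShift_apply, mul_comm]

lemma addchar_map_sum {p : ℕ} [NeZero p] {α : Type*} (S : Finset α) (f : α → ZMod p) :
    ee p (∑ a ∈ S, f a) = ∏ a ∈ S, ee p (f a) := by
  classical
  induction S using Finset.induction with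
  | empty => simp
  | insert _ _ h ih => rw [Finset.sum_insert h, Finset.prod_insert h, AddChar.map_add_eq_mul, ih]

lemma key_identity (p : ℕ) [NeZero p] (D : Finset (ZMod p)) (b : ZMod p) :
    (p : ℂ) * ((D.powerset.filter (fun S => S.sum id = b)).card : ℂ)
      = ∑ t : ZMod p, ee p (-(t * b)) * ∏ a ∈ D, (1 + ee p (t * a)) := by
  classical
  have hexp : ∀ t : ZMod p, ∏ a ∈ D, (1 + ee p (t * a))
      = ∑ S ∈ D.powerset, ee p (t * S.sum id) := by
    intro t
    have h1 : ∏ a ∈ D, (1 + ee p (t * a)) = ∏ a ∈ D, (ee p (t * a) + 1) := by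
      apply Finset.prod_congr rfl; intros; ring
    rw [h1, Finset.prod_add]
    apply Finset.sum_congr rfl
    intro S hS
    rw [Finset.prod_const_one, mul_one, Finset.mul_sum, addchar_map_sum]
    rfl
  calc (p : ℂ) * ((D.powerset.filter (fun S => S.sum id = b)).card : ℂ)
      = ∑ S ∈ D.powerset, (if S.sum id = b then (p : ℂ) else 0) := by
        rw [Finset.sum_ite, Finset.sum_const_zero, add_zero, Finset.sum_const,
          nsmul_eq_mul, mul_comm]
    _ = ∑ S ∈ D.powerset, ∑ t : ZMod p, ee p (t * (S.sum id - b)) := by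
        apply Finset.sum_congr rfl
        intro S _
        rw [sum_ee_mul]
        congr 1
        simp [sub_eq_zero]
    _ = ∑ t : ZMod p, ∑ S ∈ D.powerset, ee p (-(t * b)) * ee p (t * S.sum id) := by
        rw [Finset.sum_comm]
        apply Finset.sum_congr rfl; intro S _
        apply Finset.sum_congr rfl; intro t _
        rw [← AddChar.map_add_eq_mul]
        congr 1
        ring
    _ = ∑ t : ZMod p, ee p (-(t * b)) * ∏ a ∈ D, (1 + ee p (t * a)) := by
        apply Finset.sum_congr rfl; intro t _
        rw [hexp, Finset.mul_sum]

lemma prod_norm_le (p : ℕ) [NeZero p] (hp1 : 1 < p) (hodd : p % 2 = 1) (E : Finset (ZMod p)) :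
    ∏ a ∈ E, ‖1 + ee p a‖
      ≤ 2 * (p : ℝ) ^ (p - E.card) / (Nat.factorial (p - E.card)) := by
  classical
  have hp0 : 0 < (p : ℝ) := by positivity
  set m := p - E.card with hm
  set T := Eᶜ with hT
  have hcardT : T.card = m := by
    rw [hT, Finset.card_compl, ZMod.card]
  have hTlower : (Nat.factorial m : ℝ) / p ^ m ≤ ∏ x ∈ T, ‖1 + ee p x‖ := by
    have h1 : (Nat.factorial m : ℝ) ≤ 2 ^ m * ∏ x ∈ T, (dd x : ℝ) := by
      have := prod_dd hodd T
      rw [hcardT] at this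
      push_cast at this ⊢
      exact_mod_cast this
    have h2 : ∏ x ∈ T, (2 * (dd x : ℝ) / p) = (2 ^ m * ∏ x ∈ T, (dd x : ℝ)) / p ^ m := by
      rw [Finset.prod_div_distrib, Finset.prod_mul_distrib, Finset.prod_const,
        Finset.prod_const, hcardT]
    have h3 : ∏ x ∈ T, (2 * (dd x : ℝ) / p) ≤ ∏ x ∈ T, ‖1 + ee p x‖ := by
      apply Finset.prod_le_prod
      · intros; positivity
      · intros x _; exact two_dd_le p x
    calc (Nat.factorial m : ℝ) / p ^ m ≤ (2 ^ m * ∏ x ∈ T, (dd x : ℝ)) / p ^ m := by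
          gcongr
      _ = ∏ x ∈ T, (2 * (dd x : ℝ) / p) := h2.symm
      _ ≤ ∏ x ∈ T, ‖1 + ee p x‖ := h3
  have hfacpos : (0 : ℝ) < (Nat.factorial m : ℝ) / p ^ m := by
    have := Nat.factorial_pos m
    positivity
  have hTpos : 0 < ∏ x ∈ T, ‖1 + ee p x‖ := lt_of_lt_of_le hfacpos hTlower
  have huniv : (∏ a ∈ E, ‖1 + ee p a‖) * ∏ x ∈ T, ‖1 + ee p x‖ = 2 := by
    rw [hT, Finset.prod_mul_prod_compl, ← norm_prod, prod_one_add_ee p hp1 hodd]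
    simp
  have hE : ∏ a ∈ E, ‖1 + ee p a‖ = 2 / ∏ x ∈ T, ‖1 + ee p x‖ := by
    rw [eq_div_iff hTpos.ne']
    exact huniv
  rw [hE]
  calc (2 : ℝ) / ∏ x ∈ T, ‖1 + ee p x‖
      ≤ 2 / ((Nat.factorial m : ℝ) / p ^ m) := by
        apply div_le_div_of_nonneg_left (by norm_num) hfacpos hTlower
    _ = 2 * (p : ℝ) ^ m / (Nat.factorial m) := by
        field_simp


lemma pow_self_le_four_pow_mul_factorial (m : ℕ) : m ^ m ≤ 4 ^ m * Nat.factorial m := by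
  have h1 : Nat.factorial m * (m + 1) ^ m ≤ Nat.factorial (m + m) :=
    Nat.factorial_mul_pow_le_factorial
  have h2 : Nat.factorial (m + m) = (m + m).choose m * (Nat.factorial m * Nat.factorial m) := by
    have := Nat.choose_mul_factorial_mul_factorial (Nat.le_add_right m m)
    rw [Nat.add_sub_cancel] at this
    rw [← this]; ring
  have h3 : (m + m).choose m ≤ 4 ^ m := by
    have hsum := Nat.sum_range_choose (m + m)
    have hmem : m ∈ Finset.range (m + m + 1) := by
      simp
    have hle : (m + m).choose m ≤ ∑ k ∈ Finset.range (m + m + 1), (m + m).choose k :=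
      Finset.single_le_sum (fun _ _ => Nat.zero_le _) hmem
    calc (m + m).choose m ≤ 2 ^ (m + m) := by rw [← hsum]; exact hle
      _ = 4 ^ m := by rw [show m + m = 2 * m by ring, pow_mul]; norm_num
  have h4 : Nat.factorial m * (m + 1) ^ m ≤ Nat.factorial m * (4 ^ m * Nat.factorial m) := by
    calc Nat.factorial m * (m + 1) ^ m ≤ Nat.factorial (m + m) := h1
      _ = (m + m).choose m * (Nat.factorial m * Nat.factorial m) := h2
      _ ≤ 4 ^ m * (Nat.factorial m * Nat.factorial m) := by
          apply Nat.mul_le_mul_right _ h3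
      _ = Nat.factorial m * (4 ^ m * Nat.factorial m) := by ring
  have h5 : (m + 1) ^ m ≤ 4 ^ m * Nat.factorial m :=
    Nat.le_of_mul_le_mul_left h4 (Nat.factorial_pos m)
  calc m ^ m ≤ (m + 1) ^ m := Nat.pow_le_pow_left (by omega) m
    _ ≤ 4 ^ m * Nat.factorial m := h5

lemma log_le_two_sqrt {x : ℝ} (hx : 0 < x) : Real.log x ≤ 2 * Real.sqrt x := by
  have h1 : Real.log (Real.sqrt x) ≤ Real.sqrt x - 1 :=
    Real.log_le_sub_one_of_pos (Real.sqrt_pos.mpr hx)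
  have h2 : Real.log (Real.sqrt x) = Real.log x / 2 := Real.log_sqrt hx.le
  linarith [Real.sqrt_nonneg x]

lemma pow_le_factorial_mul_exp (p m : ℕ) (hp : 0 < p) (hm : (m : ℝ) ≤ (p : ℝ) / 1000) :
    (p : ℝ) ^ m ≤ (Nat.factorial m : ℝ) * Real.exp (2 * p / 15) := by
  have hP : (0:ℝ) < p := by exact_mod_cast hp
  rcases Nat.eq_zero_or_pos m with rfl | hm1
  · simpa using Real.one_le_exp (by positivity)
  have hM : (0:ℝ) < m := by exact_mod_cast hm1
  have hfrac : (0:ℝ) < 4 * p / m := by positivity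
  -- key log bound
  have hlog : (m : ℝ) * Real.log (4 * p / m) ≤ 2 * p / 15 := by
    have h1 : Real.log (4 * p / m) ≤ 2 * Real.sqrt (4 * p / m) := log_le_two_sqrt hfrac
    have hA : (m : ℝ) * (2 * Real.sqrt (4 * p / m)) = Real.sqrt (16 * p * m) := by
      rw [show (16:ℝ) * p * m = ((m:ℝ) * 2) ^ 2 * (4 * p / m) by field_simp; ring,
        Real.sqrt_mul (by positivity), Real.sqrt_sq (by positivity)]
      ring
    have hB : Real.sqrt (16 * (p:ℝ) * m) ≤ 2 * p / 15 := by
      rw [show (2 * (p:ℝ) / 15) = Real.sqrt ((2 * p / 15) ^ 2) by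
        rw [Real.sqrt_sq (by positivity)]]
      apply Real.sqrt_le_sqrt
      nlinarith
    calc (m : ℝ) * Real.log (4 * p / m) ≤ (m : ℝ) * (2 * Real.sqrt (4 * p / m)) := by
          apply mul_le_mul_of_nonneg_left h1 hM.le
      _ = Real.sqrt (16 * p * m) := hA
      _ ≤ 2 * p / 15 := hB
  have hexp : (4 * (p:ℝ) / m) ^ m ≤ Real.exp (2 * p / 15) := by
    have : (4 * (p:ℝ) / m) ^ m = Real.exp ((m : ℝ) * Real.log (4 * p / m)) := by
      rw [Real.exp_nat_mul, Real.exp_log hfrac]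
    rw [this]
    exact Real.exp_le_exp.mpr hlog
  have hm4 : ((m:ℝ) / 4) ^ m ≤ Nat.factorial m := by
    rw [div_pow]
    rw [div_le_iff₀ (by positivity)]
    have := pow_self_le_four_pow_mul_factorial m
    have hcast : ((m:ℝ)) ^ m ≤ 4 ^ m * (Nat.factorial m : ℝ) := by exact_mod_cast this
    linarith
  calc (p : ℝ) ^ m = (4 * p / m * (m / 4)) ^ m := by
        congr 1
        field_simp
    _ = (4 * (p:ℝ) / m) ^ m * ((m:ℝ) / 4) ^ m := mul_pow ..
    _ ≤ Real.exp (2 * p / 15) * (Nat.factorial m : ℝ) := by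
        apply mul_le_mul hexp hm4 (by positivity) (by positivity)
    _ = (Nat.factorial m : ℝ) * Real.exp (2 * p / 15) := mul_comm ..

lemma numeric_final {ε : ℝ} (hε : 0 < ε) (p m : ℕ)
    (hp1000 : 1000 ≤ p) (hpε : 432 / ε ≤ (p : ℝ)) (hmp : (m : ℝ) ≤ (p : ℝ) / 1000) :
    (p : ℝ) * (2 * (p : ℝ) ^ m / (Nat.factorial m)) ≤ ε * 2 ^ (p - m) := by
  have hP : (1000 : ℝ) ≤ (p : ℝ) := by exact_mod_cast hp1000
  have hP0 : (0 : ℝ) < p := by linarith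
  have hmlep : m ≤ p := by
    have : (m : ℝ) ≤ (p : ℝ) := by linarith
    exact_mod_cast this
  have hfac : (0:ℝ) < (Nat.factorial m : ℝ) := by exact_mod_cast Nat.factorial_pos m
  have h1 : (p : ℝ) ^ m / (Nat.factorial m) ≤ Real.exp (2 * p / 15) := by
    rw [div_le_iff₀ hfac, mul_comm]
    exact pow_le_factorial_mul_exp p m (by omega) hmp
  have hcast : ((p - m : ℕ) : ℝ) = (p : ℝ) - m := by
    push_cast [hmlep]; ring
  have hlog2 : (0.6931 : ℝ) ≤ Real.log 2 := by
    have := Real.log_two_gt_d9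
    linarith
  have h2 : Real.exp (((p : ℝ) - m) * Real.log 2) = (2 : ℝ) ^ (p - m) := by
    rw [← hcast, Real.exp_nat_mul, Real.exp_log two_pos]
  have h3 : Real.exp (0.692 * p) ≤ (2:ℝ) ^ (p - m) := by
    rw [← h2]
    apply Real.exp_le_exp.mpr
    have hpm : (0.999 : ℝ) * p ≤ (p : ℝ) - m := by linarith
    nlinarith [Real.log_nonneg (by norm_num : (1:ℝ) ≤ 2)]
  -- main comparison: 2 * p * exp(2p/15) ≤ ε * exp(0.692 p)
  have hkey : 2 * (p:ℝ) * Real.exp (2 * p / 15) ≤ ε * Real.exp (0.692 * p) := by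
    have hsplit : Real.exp (0.692 * p) = Real.exp (2 * p / 15) * Real.exp (0.692 * p - 2 * p / 15) := by
      rw [← Real.exp_add]; ring_nf
    rw [hsplit]
    have hmain : 2 * (p:ℝ) ≤ ε * Real.exp (0.692 * p - 2 * p / 15) := by
      have hge : Real.exp ((p:ℝ) / 2) ≤ Real.exp (0.692 * p - 2 * p / 15) := by
        apply Real.exp_le_exp.mpr
        nlinarith
      have hcube : ((p:ℝ) / 6) ^ 3 ≤ Real.exp ((p:ℝ) / 2) := by
        have h6 : Real.exp ((p:ℝ) / 2) = (Real.exp ((p:ℝ) / 6)) ^ 3 := by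
          rw [← Real.exp_nat_mul]; congr 1; push_cast; ring
        have h7 : (p:ℝ) / 6 + 1 ≤ Real.exp ((p:ℝ) / 6) := Real.add_one_le_exp _
        rw [h6]
        have h8 : (0:ℝ) ≤ (p:ℝ) / 6 := by positivity
        calc ((p:ℝ)/6)^3 ≤ ((p:ℝ)/6 + 1)^3 := by nlinarith
          _ ≤ (Real.exp ((p:ℝ)/6))^3 := by
              apply pow_le_pow_left₀ (by linarith) h7
      have hεP : (432 : ℝ) ≤ ε * p := by
        rw [div_le_iff₀ hε] at hpε
        linarith
      have : 2 * (p:ℝ) ≤ ε * (((p:ℝ) / 6) ^ 3) := by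
        have hh := mul_le_mul_of_nonneg_right hεP (by positivity : (0:ℝ) ≤ (p:ℝ) ^ 2)
        nlinarith [sq_nonneg ((p:ℝ) - 1)]
      calc 2 * (p:ℝ) ≤ ε * (((p:ℝ) / 6) ^ 3) := this
        _ ≤ ε * Real.exp ((p:ℝ) / 2) := by nlinarith
        _ ≤ ε * Real.exp (0.692 * p - 2 * p / 15) := by
            apply mul_le_mul_of_nonneg_left hge hε.le
    calc 2 * (p:ℝ) * Real.exp (2 * p / 15)
        = Real.exp (2 * p / 15) * (2 * (p:ℝ)) := by ring
      _ ≤ Real.exp (2 * p / 15) * (ε * Real.exp (0.692 * p - 2 * p / 15)) := by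
          apply mul_le_mul_of_nonneg_left hmain (Real.exp_nonneg _)
      _ = ε * (Real.exp (2 * p / 15) * Real.exp (0.692 * p - 2 * p / 15)) := by ring
  calc (p : ℝ) * (2 * (p : ℝ) ^ m / (Nat.factorial m))
      = 2 * (p:ℝ) * ((p:ℝ) ^ m / (Nat.factorial m)) := by ring
    _ ≤ 2 * (p:ℝ) * Real.exp (2 * p / 15) := by
        apply mul_le_mul_of_nonneg_left h1 (by positivity)
    _ ≤ ε * Real.exp (0.692 * p) := hkey
    _ ≤ ε * 2 ^ (p - m) := mul_le_mul_of_nonneg_left h3 hε.le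


lemma deviation_bound (p : ℕ) (hp : p.Prime) (hodd : p % 2 = 1) (D : Finset (ZMod p))
    (b : ZMod p) :
    |(p : ℝ) * ((D.powerset.filter (fun S => S.sum id = b)).card : ℝ) - 2 ^ D.card|
      ≤ (p : ℝ) * (2 * (p : ℝ) ^ (p - D.card) / Nat.factorial (p - D.card)) := by
  classical
  haveI : Fact p.Prime := ⟨hp⟩
  haveI : NeZero p := ⟨hp.ne_zero⟩
  set N : ℕ := (D.powerset.filter (fun S => S.sum id = b)).card with hN
  set F : ZMod p → ℂ := fun t => ee p (-(t * b)) * ∏ a ∈ D, (1 + ee p (t * a)) with hF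
  have hkey : (p : ℂ) * (N : ℂ) = ∑ t : ZMod p, F t := key_identity p D b
  have hF0 : F 0 = 2 ^ D.card := by
    have hc : ∀ a ∈ D, (1 : ℂ) + ee p ((0 : ZMod p) * a) = 2 := by
      intro a _
      rw [zero_mul, AddChar.map_zero_eq_one]
      norm_num
    simp only [hF, zero_mul, neg_zero, AddChar.map_zero_eq_one, one_mul]
    norm_num [Finset.prod_const]
  have hsum : (p : ℂ) * (N : ℂ) - 2 ^ D.card = ∑ t ∈ univ.erase (0 : ZMod p), F t := by
    rw [hkey, ← Finset.add_sum_erase _ F (mem_univ (0 : ZMod p)), hF0]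
    ring
  set B : ℝ := 2 * (p : ℝ) ^ (p - D.card) / Nat.factorial (p - D.card) with hB
  have hterm : ∀ t ∈ univ.erase (0 : ZMod p), ‖F t‖ ≤ B := by
    intro t ht
    have ht0 : t ≠ 0 := (Finset.mem_erase.mp ht).1
    have hnorm : ‖F t‖ = ∏ a ∈ D, ‖1 + ee p (t * a)‖ := by
      rw [hF]
      simp only
      rw [norm_mul, norm_ee, one_mul, norm_prod]
    have hinj : ∀ x ∈ D, ∀ y ∈ D, t * x = t * y → x = y := by
      intro x _ y _ hxy
      exact mul_left_cancel₀ ht0 hxy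
    have himg : ∏ c ∈ D.image (fun a => t * a), ‖1 + ee p c‖
        = ∏ a ∈ D, ‖1 + ee p (t * a)‖ :=
      Finset.prod_image (g := fun a => t * a) (f := fun c => ‖1 + ee p c‖) hinj
    have hcardimg : (D.image (fun a => t * a)).card = D.card :=
      Finset.card_image_of_injective D (mul_right_injective₀ ht0)
    have := prod_norm_le p hp.one_lt hodd (D.image (fun a => t * a))
    rw [hcardimg] at this
    rw [hnorm, ← himg]
    exact this
  have hBnonneg : 0 ≤ B := by
    rw [hB]; positivity
  have hnormsum : ‖∑ t ∈ univ.erase (0 : ZMod p), F t‖ ≤ (p : ℝ) * B := by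
    calc ‖∑ t ∈ univ.erase (0 : ZMod p), F t‖ ≤ ∑ t ∈ univ.erase (0 : ZMod p), ‖F t‖ :=
          norm_sum_le _ _
      _ ≤ ∑ _t ∈ univ.erase (0 : ZMod p), B := Finset.sum_le_sum hterm
      _ = ((univ.erase (0 : ZMod p)).card : ℝ) * B := by rw [Finset.sum_const, nsmul_eq_mul]
      _ ≤ (p : ℝ) * B := by
          apply mul_le_mul_of_nonneg_right _ hBnonneg
          have : (univ.erase (0 : ZMod p)).card = p - 1 := by
            rw [Finset.card_erase_of_mem (mem_univ _), Finset.card_univ, ZMod.card]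
          rw [this]
          have hp1 : 1 ≤ p := hp.one_lt.le
          push_cast [hp1]
          linarith
  have hbridge : |(p : ℝ) * (N : ℝ) - 2 ^ D.card| = ‖(p : ℂ) * (N : ℂ) - 2 ^ D.card‖ := by
    have hcast : (((p : ℝ) * (N : ℝ) - 2 ^ D.card : ℝ) : ℂ) = (p : ℂ) * (N : ℂ) - 2 ^ D.card := by
      push_cast
      ring
    rw [← hcast, Complex.norm_real, Real.norm_eq_abs]
  rw [hbridge, hsum]
  exact hnormsum

theorem card_subsets_sum_eq_asymptotic :
    ∀ ε > (0 : ℝ), ∃ δ > (0 : ℝ), ∃ P : ℕ, ∀ p : ℕ, p.Prime → P ≤ p →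
      ∀ D : Finset (ZMod p), (p : ℝ) - D.card ≤ δ * p →
        ∀ b : ZMod p,
          |(p : ℝ) * ((D.powerset.filter (fun S => S.sum id = b)).card : ℝ) /
              2 ^ D.card - 1| ≤ ε := by
  intro ε hε
  refine ⟨1 / 1000, by norm_num, 1000 + ⌈432 / ε⌉₊, ?_⟩
  intro p hp hP D hD b
  haveI : NeZero p := ⟨hp.ne_zero⟩
  have hp1000 : 1000 ≤ p := by omega
  have hpε : 432 / ε ≤ (p : ℝ) := by
    calc 432 / ε ≤ (⌈432 / ε⌉₊ : ℝ) := Nat.le_ceil _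
      _ ≤ (p : ℝ) := by exact_mod_cast le_trans (by omega) hP
  have hodd : p % 2 = 1 := Nat.odd_iff.mp (hp.odd_of_ne_two (by omega))
  have hcard : D.card ≤ p := by
    calc D.card ≤ Fintype.card (ZMod p) := Finset.card_le_univ D
      _ = p := ZMod.card p
  set m : ℕ := p - D.card with hm
  have hmR : (m : ℝ) = (p : ℝ) - D.card := by
    rw [hm]; push_cast [hcard]; ring
  have hmp : (m : ℝ) ≤ (p : ℝ) / 1000 := by
    rw [hmR]
    calc (p : ℝ) - D.card ≤ 1 / 1000 * p := hD
      _ = (p : ℝ) / 1000 := by ring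
  have hpm : p - m = D.card := by omega
  set N : ℝ := ((D.powerset.filter (fun S => S.sum id = b)).card : ℝ) with hN
  have h2n : (0 : ℝ) < 2 ^ D.card := by positivity
  have hrewrite : (p : ℝ) * N / 2 ^ D.card - 1 = ((p : ℝ) * N - 2 ^ D.card) / 2 ^ D.card := by
    field_simp
  rw [hrewrite, abs_div, abs_of_pos h2n, div_le_iff₀ h2n]
  calc |(p : ℝ) * N - 2 ^ D.card|
      ≤ (p : ℝ) * (2 * (p : ℝ) ^ m / Nat.factorial m) := deviation_bound p hp hodd D b
    _ ≤ ε * 2 ^ (p - m) := numeric_final hε p m hp1000 hpε hmp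
    _ = ε * 2 ^ D.card := by rw [hpm]
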